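/- For any two policies π and π' of the fixed finite discounted MDP, the discounted state visitation distributions satisfy ∑_s |d^π(s) − d^{π'}(s)| ≤ (2γ/(1−γ)) D^π_TV(π, π'). -/

import Mathlib

open Finset

/-- Time-`t` state distribution of policy `π` in the MDP with transitions `P`
and initial distribution `μ`. -/
noncomputable def pDist {S A : Type*} [Fintype S] [Fintype A]
    (P : S → A → S → ℝ) (μ : S → ℝ) (π : S → A → ℝ) : ℕ → S → ℝ
  | 0 => μ
  | t + 1 => fun s' => ∑ s, ∑ a, pDist P μ π t s * π s a * P s a s'

/-- Discounted state visitation distribution `d^π`. -/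
noncomputable def dvisit {S A : Type*} [Fintype S] [Fintype A]
    (P : S → A → S → ℝ) (μ : S → ℝ) (γ : ℝ) (π : S → A → ℝ) (s : S) : ℝ :=
  (1 - γ) * ∑' t : ℕ, γ ^ t * pDist P μ π t s

/-- Discounted return `J_R(π)`. -/
noncomputable def Jret {S A : Type*} [Fintype S] [Fintype A]
    (P : S → A → S → ℝ) (μ : S → ℝ) (γ : ℝ) (R : S → A → ℝ) (π : S → A → ℝ) : ℝ :=
  ∑' t : ℕ, γ ^ t * ∑ s, ∑ a, pDist P μ π t s * π s a * R s a

/-- Advantage function `A_R^π(s,a) = Q_R^π(s,a) - V_R^π(s)`, expressed in terms of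
the value function `V` of the policy. -/
noncomputable def Adv {S A : Type*} [Fintype S]
    (P : S → A → S → ℝ) (γ : ℝ) (R : S → A → ℝ) (V : S → ℝ) (s : S) (a : A) : ℝ :=
  (R s a + γ * ∑ s', P s a s' * V s') - V s

/-- KL divergence between two distributions on a finite type. -/
noncomputable def KL {X : Type*} [Fintype X] (p q : X → ℝ) : ℝ :=
  ∑ x, p x * Real.log (p x / q x)

/-- Total variation distance between two distributions on a finite type. -/
noncomputable def TV {X : Type*} [Fintype X] (p q : X → ℝ) : ℝ :=
  (1 / 2) * ∑ x, |p x - q x|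

section aux
variable {S A : Type*} [Fintype S] [Fintype A]
  (P : S → A → S → ℝ) (μ : S → ℝ) (π π' : S → A → ℝ)

lemma pDist_nonneg (hP0 : ∀ s a s', 0 ≤ P s a s') (hμ0 : ∀ s, 0 ≤ μ s)
    (hπ0 : ∀ s a, 0 ≤ π s a) : ∀ t s, 0 ≤ pDist P μ π t s := by
  intro t
  induction t with
  | zero => exact hμ0
  | succ t ih =>
    intro s'
    exact Finset.sum_nonneg fun s _ => Finset.sum_nonneg fun a _ =>
      mul_nonneg (mul_nonneg (ih s) (hπ0 s a)) (hP0 s a s')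

lemma pDist_sum (hP1 : ∀ s a, ∑ s', P s a s' = 1) (hμ1 : ∑ s, μ s = 1)
    (hπ1 : ∀ s, ∑ a, π s a = 1) : ∀ t, ∑ s, pDist P μ π t s = 1 := by
  intro t
  induction t with
  | zero => exact hμ1
  | succ t ih =>
    show ∑ s', ∑ s, ∑ a, pDist P μ π t s * π s a * P s a s' = 1
    rw [Finset.sum_comm]
    calc ∑ s, ∑ s', ∑ a, pDist P μ π t s * π s a * P s a s'
        = ∑ s, ∑ a, ∑ s', pDist P μ π t s * π s a * P s a s' := by
          exact Finset.sum_congr rfl fun s _ => Finset.sum_comm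
      _ = ∑ s, ∑ a, pDist P μ π t s * π s a := by
          refine Finset.sum_congr rfl fun s _ => Finset.sum_congr rfl fun a _ => ?_
          rw [← Finset.mul_sum, hP1, mul_one]
      _ = ∑ s, pDist P μ π t s := by
          refine Finset.sum_congr rfl fun s _ => ?_
          rw [← Finset.mul_sum, hπ1, mul_one]
      _ = 1 := ih

lemma pDist_le_one (hP0 : ∀ s a s', 0 ≤ P s a s') (hP1 : ∀ s a, ∑ s', P s a s' = 1)
    (hμ0 : ∀ s, 0 ≤ μ s) (hμ1 : ∑ s, μ s = 1)
    (hπ0 : ∀ s a, 0 ≤ π s a) (hπ1 : ∀ s, ∑ a, π s a = 1) (t : ℕ) (s : S) :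
    pDist P μ π t s ≤ 1 := by
  have := pDist_sum P μ π hP1 hμ1 hπ1 t
  calc pDist P μ π t s ≤ ∑ s', pDist P μ π t s' :=
        Finset.single_le_sum (fun s' _ => pDist_nonneg P μ π hP0 hμ0 hπ0 t s') (Finset.mem_univ s)
    _ = 1 := this

lemma step_bound (hP0 : ∀ s a s', 0 ≤ P s a s') (hP1 : ∀ s a, ∑ s', P s a s' = 1)
    (hμ0 : ∀ s, 0 ≤ μ s)
    (hπ0 : ∀ s a, 0 ≤ π s a)
    (hπ'0 : ∀ s a, 0 ≤ π' s a) (hπ'1 : ∀ s, ∑ a, π' s a = 1) (t : ℕ) :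
    ∑ s', |pDist P μ π (t + 1) s' - pDist P μ π' (t + 1) s'| ≤
      (∑ s, |pDist P μ π t s - pDist P μ π' t s|) +
        ∑ s, pDist P μ π t s * ∑ a, |π s a - π' s a| := by
  set p := pDist P μ π t with hp
  set q := pDist P μ π' t with hq
  have key : ∀ s', pDist P μ π (t + 1) s' - pDist P μ π' (t + 1) s' =
      ∑ s, ∑ a, (p s * π s a - q s * π' s a) * P s a s' := by
    intro s'
    show (∑ s, ∑ a, p s * π s a * P s a s') - (∑ s, ∑ a, q s * π' s a * P s a s') = _
    rw [← Finset.sum_sub_distrib]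
    refine Finset.sum_congr rfl fun s _ => ?_
    rw [← Finset.sum_sub_distrib]
    exact Finset.sum_congr rfl fun a _ => by ring
  calc ∑ s', |pDist P μ π (t + 1) s' - pDist P μ π' (t + 1) s'|
      = ∑ s', |∑ s, ∑ a, (p s * π s a - q s * π' s a) * P s a s'| := by
        exact Finset.sum_congr rfl fun s' _ => by rw [key]
    _ ≤ ∑ s', ∑ s, ∑ a, |p s * π s a - q s * π' s a| * P s a s' := by
        refine Finset.sum_le_sum fun s' _ => ?_
        refine (Finset.abs_sum_le_sum_abs _ _).trans ?_
        refine Finset.sum_le_sum fun s _ => ?_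
        refine (Finset.abs_sum_le_sum_abs _ _).trans ?_
        refine Finset.sum_le_sum fun a _ => ?_
        rw [abs_mul, abs_of_nonneg (hP0 s a s')]
    _ = ∑ s, ∑ a, |p s * π s a - q s * π' s a| := by
        rw [Finset.sum_comm]
        refine Finset.sum_congr rfl fun s _ => ?_
        rw [Finset.sum_comm]
        refine Finset.sum_congr rfl fun a _ => ?_
        rw [← Finset.mul_sum, hP1, mul_one]
    _ ≤ ∑ s, ∑ a, (p s * |π s a - π' s a| + |p s - q s| * π' s a) := by
        refine Finset.sum_le_sum fun s _ => Finset.sum_le_sum fun a _ => ?_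
        have h1 : p s * π s a - q s * π' s a
            = p s * (π s a - π' s a) + (p s - q s) * π' s a := by ring
        rw [h1]
        refine (abs_add_le _ _).trans ?_
        rw [abs_mul, abs_mul, abs_of_nonneg (pDist_nonneg P μ π hP0 hμ0 hπ0 t s),
          abs_of_nonneg (hπ'0 s a)]
    _ = (∑ s, |p s - q s|) + ∑ s, p s * ∑ a, |π s a - π' s a| := by
        rw [← Finset.sum_add_distrib]
        refine Finset.sum_congr rfl fun s _ => ?_
        rw [Finset.sum_add_distrib, ← Finset.mul_sum, ← Finset.mul_sum]
        rw [hπ'1, mul_one]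
        ring

end aux

set_option maxHeartbeats 1000000 in
/-- For any two policies `π` and `π'`, the discounted state visitation distributions satisfy
`∑_s |d^π(s) − d^{π'}(s)| ≤ (2γ/(1−γ)) D^π_TV(π, π')`. -/
theorem stmt_2 {S A : Type*} [Fintype S] [Fintype A] [Nonempty S] [Nonempty A]
    (P : S → A → S → ℝ)
    (hP0 : ∀ s a s', 0 ≤ P s a s') (hP1 : ∀ s a, ∑ s', P s a s' = 1)
    (γ : ℝ) (hγ0 : 0 < γ) (hγ1 : γ < 1)
    (μ : S → ℝ) (hμ0 : ∀ s, 0 ≤ μ s) (hμ1 : ∑ s, μ s = 1)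
    (π π' : S → A → ℝ)
    (hπ0 : ∀ s a, 0 ≤ π s a) (hπ1 : ∀ s, ∑ a, π s a = 1)
    (hπ'0 : ∀ s a, 0 ≤ π' s a) (hπ'1 : ∀ s, ∑ a, π' s a = 1) :
    ∑ s, |dvisit P μ γ π s - dvisit P μ γ π' s| ≤
      (2 * γ / (1 - γ)) * ∑ s, dvisit P μ γ π s * TV (π s) (π' s) := by
  have h1γ : (0:ℝ) < 1 - γ := by linarith
  have hγn : (0:ℝ) ≤ γ := le_of_lt hγ0
  set p := pDist P μ π with hpdef
  set q := pDist P μ π' with hqdef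
  have hp0 : ∀ t s, 0 ≤ p t s := pDist_nonneg P μ π hP0 hμ0 hπ0
  have hq0 : ∀ t s, 0 ≤ q t s := pDist_nonneg P μ π' hP0 hμ0 hπ'0
  have hp1 : ∀ t, ∑ s, p t s = 1 := pDist_sum P μ π hP1 hμ1 hπ1
  have hq1 : ∀ t, ∑ s, q t s = 1 := pDist_sum P μ π' hP1 hμ1 hπ'1
  have hple : ∀ t s, p t s ≤ 1 := pDist_le_one P μ π hP0 hP1 hμ0 hμ1 hπ0 hπ1
  have hqle : ∀ t s, q t s ≤ 1 := pDist_le_one P μ π' hP0 hP1 hμ0 hμ1 hπ'0 hπ'1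
  have hgeo : Summable (fun t : ℕ => γ ^ t) :=
    summable_geometric_of_lt_one hγn hγ1
  set δ : ℕ → ℝ := fun t => ∑ s, |p t s - q t s| with hδdef
  set ε : ℕ → ℝ := fun t => ∑ s, p t s * TV (π s) (π' s) with hεdef
  -- basic bounds
  have hTV0 : ∀ s : S, 0 ≤ TV (π s) (π' s) := fun s => by
    unfold TV
    positivity
  have hTV1 : ∀ s : S, TV (π s) (π' s) ≤ 1 := fun s => by
    unfold TV
    have : ∑ a, |π s a - π' s a| ≤ ∑ a, (π s a + π' s a) :=
      Finset.sum_le_sum fun a _ => (abs_sub _ _).trans (by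
        rw [abs_of_nonneg (hπ0 s a), abs_of_nonneg (hπ'0 s a)])
    rw [Finset.sum_add_distrib, hπ1, hπ'1] at this
    linarith
  have hδ0 : ∀ t, 0 ≤ δ t := fun t =>
    Finset.sum_nonneg fun s _ => abs_nonneg _
  have hδ2 : ∀ t, δ t ≤ 2 := by
    intro t
    have : δ t ≤ ∑ s, (p t s + q t s) :=
      Finset.sum_le_sum fun s _ => (abs_sub _ _).trans (by
        rw [abs_of_nonneg (hp0 t s), abs_of_nonneg (hq0 t s)])
    rw [Finset.sum_add_distrib, hp1, hq1] at this
    linarith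
  have hε0 : ∀ t, 0 ≤ ε t := fun t =>
    Finset.sum_nonneg fun s _ => mul_nonneg (hp0 t s) (hTV0 s)
  have hε1 : ∀ t, ε t ≤ 1 := by
    intro t
    have : ε t ≤ ∑ s, p t s :=
      Finset.sum_le_sum fun s _ => by
        calc p t s * TV (π s) (π' s) ≤ p t s * 1 :=
              mul_le_mul_of_nonneg_left (hTV1 s) (hp0 t s)
          _ = p t s := mul_one _
    rw [hp1] at this
    linarith
  -- summability
  have Sδ : Summable (fun t : ℕ => γ ^ t * δ t) := by
    refine Summable.of_nonneg_of_le (fun t => mul_nonneg (pow_nonneg hγn t) (hδ0 t))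
      (fun t => ?_) (hgeo.mul_left 2)
    calc γ ^ t * δ t ≤ γ ^ t * 2 :=
          mul_le_mul_of_nonneg_left (hδ2 t) (pow_nonneg hγn t)
      _ = 2 * γ ^ t := by ring
  have Sε : Summable (fun t : ℕ => γ ^ t * ε t) := by
    refine Summable.of_nonneg_of_le (fun t => mul_nonneg (pow_nonneg hγn t) (hε0 t))
      (fun t => ?_) hgeo
    calc γ ^ t * ε t ≤ γ ^ t * 1 :=
          mul_le_mul_of_nonneg_left (hε1 t) (pow_nonneg hγn t)
      _ = γ ^ t := mul_one _
  have Sp : ∀ s, Summable (fun t : ℕ => γ ^ t * p t s) := fun s => by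
    refine Summable.of_nonneg_of_le (fun t => mul_nonneg (pow_nonneg hγn t) (hp0 t s))
      (fun t => ?_) hgeo
    calc γ ^ t * p t s ≤ γ ^ t * 1 :=
          mul_le_mul_of_nonneg_left (hple t s) (pow_nonneg hγn t)
      _ = γ ^ t := mul_one _
  have Sq : ∀ s, Summable (fun t : ℕ => γ ^ t * q t s) := fun s => by
    refine Summable.of_nonneg_of_le (fun t => mul_nonneg (pow_nonneg hγn t) (hq0 t s))
      (fun t => ?_) hgeo
    calc γ ^ t * q t s ≤ γ ^ t * 1 :=
          mul_le_mul_of_nonneg_left (hqle t s) (pow_nonneg hγn t)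
      _ = γ ^ t := mul_one _
  have Sabs : ∀ s, Summable (fun t : ℕ => γ ^ t * |p t s - q t s|) := fun s => by
    refine Summable.of_nonneg_of_le (fun t => mul_nonneg (pow_nonneg hγn t) (abs_nonneg _))
      (fun t => ?_) (hgeo.mul_left 2)
    have : |p t s - q t s| ≤ 2 := (abs_sub _ _).trans (by
      rw [abs_of_nonneg (hp0 t s), abs_of_nonneg (hq0 t s)]
      linarith [hple t s, hqle t s])
    calc γ ^ t * |p t s - q t s| ≤ γ ^ t * 2 :=
          mul_le_mul_of_nonneg_left this (pow_nonneg hγn t)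
      _ = 2 * γ ^ t := by ring
  have Sdiff : ∀ s, Summable (fun t : ℕ => γ ^ t * (p t s - q t s)) := fun s => by
    have := (Sp s).sub (Sq s)
    refine this.congr fun t => by ring
  -- core inequality
  set T := ∑' t : ℕ, γ ^ t * δ t with hTdef
  set E := ∑' t : ℕ, γ ^ t * ε t with hEdef
  have hT0 : 0 ≤ T := tsum_nonneg fun t => mul_nonneg (pow_nonneg hγn t) (hδ0 t)
  have hE0 : 0 ≤ E := tsum_nonneg fun t => mul_nonneg (pow_nonneg hγn t) (hε0 t)
  have hstep : ∀ t, δ (t + 1) ≤ δ t + 2 * ε t := by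
    intro t
    have h2ε : ∑ s, p t s * ∑ a, |π s a - π' s a| = 2 * ε t := by
      rw [hεdef, Finset.mul_sum]
      refine Finset.sum_congr rfl fun s _ => ?_
      unfold TV
      ring
    have := step_bound P μ π π' hP0 hP1 hμ0 hπ0 hπ'0 hπ'1 t
    rw [h2ε] at this
    exact this
  have hcore : (1 - γ) * T ≤ 2 * γ * E := by
    have hδz : δ 0 = 0 := by
      show (∑ s, |p 0 s - q 0 s|) = 0
      have hps : ∀ s : S, p 0 s = μ s := fun s => rfl
      have hqs : ∀ s : S, q 0 s = μ s := fun s => rfl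
      refine Finset.sum_eq_zero fun s _ => ?_
      rw [hps, hqs, sub_self, abs_zero]
    have hshift : Summable (fun t : ℕ => γ ^ (t + 1) * δ (t + 1)) :=
      (summable_nat_add_iff 1).2 Sδ
    have hrhsS : Summable (fun t : ℕ => γ ^ (t + 1) * (δ t + 2 * ε t)) := by
      have := (Sδ.mul_left γ).add ((Sε.mul_left (2 * γ)))
      refine this.congr fun t => by ring
    have hTsplit : T = ∑' t : ℕ, γ ^ (t + 1) * δ (t + 1) := by
      rw [hTdef, Sδ.tsum_eq_zero_add, hδz]
      simp
    have h1 : ∑' t : ℕ, γ ^ (t + 1) * δ (t + 1) ≤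
        ∑' t : ℕ, γ ^ (t + 1) * (δ t + 2 * ε t) := by
      refine Summable.tsum_le_tsum (fun t => ?_) hshift hrhsS
      exact mul_le_mul_of_nonneg_left (hstep t) (pow_nonneg hγn _)
    have h2 : ∑' t : ℕ, γ ^ (t + 1) * (δ t + 2 * ε t) = γ * T + 2 * γ * E := by
      have : (fun t : ℕ => γ ^ (t + 1) * (δ t + 2 * ε t)) =
          fun t : ℕ => γ * (γ ^ t * δ t) + 2 * γ * (γ ^ t * ε t) := by
        funext t; ring
      rw [this, Summable.tsum_add (Sδ.mul_left γ) (Sε.mul_left (2 * γ)),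
        tsum_mul_left, tsum_mul_left]
    have hT' : T ≤ γ * T + 2 * γ * E := by
      nth_rewrite 1 [hTsplit]
      exact h1.trans (le_of_eq h2)
    nlinarith [hT']
  -- LHS bound
  have hLHS : ∑ s, |dvisit P μ γ π s - dvisit P μ γ π' s| ≤ (1 - γ) * T := by
    have habs : ∀ s : S, |dvisit P μ γ π s - dvisit P μ γ π' s| ≤
        (1 - γ) * ∑' t : ℕ, γ ^ t * |p t s - q t s| := by
      intro s
      have hdd : dvisit P μ γ π s - dvisit P μ γ π' s =
          (1 - γ) * ∑' t : ℕ, γ ^ t * (p t s - q t s) := by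
        unfold dvisit
        rw [← mul_sub, ← Summable.tsum_sub (Sp s) (Sq s)]
        congr 1
        exact tsum_congr fun t => by ring
      rw [hdd, abs_mul, abs_of_nonneg (le_of_lt h1γ)]
      refine mul_le_mul_of_nonneg_left ?_ (le_of_lt h1γ)
      have hnorm : ∀ t : ℕ, ‖γ ^ t * (p t s - q t s)‖ = γ ^ t * |p t s - q t s| := by
        intro t
        rw [Real.norm_eq_abs, abs_mul, abs_pow, abs_of_nonneg hγn]
      have hsum : Summable (fun t : ℕ => ‖γ ^ t * (p t s - q t s)‖) :=
        (Sabs s).congr fun t => (hnorm t).symm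
      have hle := norm_tsum_le_tsum_norm hsum
      rw [Real.norm_eq_abs] at hle
      exact hle.trans (le_of_eq (tsum_congr hnorm))
    calc ∑ s, |dvisit P μ γ π s - dvisit P μ γ π' s|
        ≤ ∑ s, (1 - γ) * ∑' t : ℕ, γ ^ t * |p t s - q t s| :=
          Finset.sum_le_sum fun s _ => habs s
      _ = (1 - γ) * ∑ s, ∑' t : ℕ, γ ^ t * |p t s - q t s| := by
          rw [Finset.mul_sum]
      _ = (1 - γ) * ∑' t : ℕ, ∑ s, γ ^ t * |p t s - q t s| := by
          rw [Summable.tsum_finsetSum fun s _ => Sabs s]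
      _ = (1 - γ) * T := by
          rw [hTdef]
          congr 1
          exact tsum_congr fun t => by rw [← Finset.mul_sum]
  -- RHS identity
  have hRHS : ∑ s, dvisit P μ γ π s * TV (π s) (π' s) = (1 - γ) * E := by
    calc ∑ s, dvisit P μ γ π s * TV (π s) (π' s)
        = ∑ s, (1 - γ) * ∑' t : ℕ, γ ^ t * p t s * TV (π s) (π' s) := by
          refine Finset.sum_congr rfl fun s _ => ?_
          unfold dvisit
          rw [mul_assoc, ← tsum_mul_right]
      _ = (1 - γ) * ∑' t : ℕ, ∑ s, γ ^ t * p t s * TV (π s) (π' s) := by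
          rw [← Finset.mul_sum, Summable.tsum_finsetSum]
          intro s _
          refine ((Sp s).mul_right (TV (π s) (π' s))).congr fun t => by ring
      _ = (1 - γ) * E := by
          rw [hEdef]
          congr 1
          refine tsum_congr fun t => ?_
          rw [hεdef, Finset.mul_sum]
          exact Finset.sum_congr rfl fun s _ => by ring
  rw [hRHS]
  have : (2 * γ / (1 - γ)) * ((1 - γ) * E) = 2 * γ * E := by
    field_simp
  rw [this]
  linarith [hLHS, hcore]
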